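/- arXiv:2112.13173 — 6 statements merged into one kernel-verified Lean document; each statement's English description precedes it below -/
import Mathlib

section
/- (Theorem 3.1, block form) If P L Pᵀ = [[L₁₁, L₁₂], [0, 0]], then X P H Pᵀ X⁻¹ = [[H⁽¹⁾, H⁽²⁾], [0, 0]], where H⁽¹⁾ ∈ ℝ^{(k+1)×(k+1)} is given in block form by H⁽¹⁾ = [[ξ (L₁₁ L₁₁ᵀ + L₁₂ L₁₂ᵀ) + ((1−ξ)/n) e eᵀ, ((1−ξ)(n−k)/n) e], [((1−ξ)/n) eᵀ, (1−ξ)(n−k)/n]] with e the all-ones vector of length k, and H⁽²⁾ ∈ ℝ^{(k+1)×(m−1)} is given by H⁽²⁾ = [[((1−ξ)/n) e eᵀ], [((1−ξ)/n) eᵀ]] with e the all-ones vector of length k (resp. length m−1 for eᵀ), and the bottom (m−1) rows of X P H Pᵀ X⁻¹ are zero. -/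
open Matrix

/-- Theorem 3.1 (block form). With `m = 1 + r ≥ 1` dangling nodes,
`X = diag(I_k, Y)`, `Y = I_m − ê e₁ᵀ`, and `H` the hub matrix, if
`P L Pᵀ = [[L₁₁, L₁₂], [0, 0]]` then
`X P H Pᵀ X⁻¹ = [[H⁽¹⁾, H⁽²⁾], [0, 0]]` where
`H⁽¹⁾ = [[ξ(L₁₁L₁₁ᵀ+L₁₂L₁₂ᵀ) + ((1−ξ)/n) eeᵀ, ((1−ξ)(n−k)/n) e], [((1−ξ)/n) eᵀ, (1−ξ)(n−k)/n]]`
and `H⁽²⁾ = [[((1−ξ)/n) eeᵀ], [((1−ξ)/n) eᵀ]]`, the bottom `m − 1` rows being zero. -/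
theorem lumping_theorem_block_form (k r : ℕ)
    (ξ : ℝ) (hξ0 : 0 < ξ) (hξ1 : ξ < 1)
    (L P : Matrix (Fin k ⊕ (Fin 1 ⊕ Fin r)) (Fin k ⊕ (Fin 1 ⊕ Fin r)) ℝ)
    (hP : ∃ σ : Equiv.Perm (Fin k ⊕ (Fin 1 ⊕ Fin r)), P = σ.permMatrix ℝ)
    (L11 : Matrix (Fin k) (Fin k) ℝ) (L12 : Matrix (Fin k) (Fin 1 ⊕ Fin r) ℝ)
    (hL : P * L * Pᵀ = Matrix.fromBlocks L11 L12 0 0) :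
    let n : ℝ := (k : ℝ) + (1 + r)
    let c : ℝ := (1 - ξ) / n
    let H : Matrix (Fin k ⊕ (Fin 1 ⊕ Fin r)) (Fin k ⊕ (Fin 1 ⊕ Fin r)) ℝ :=
      ξ • (L * Lᵀ) + c • Matrix.of (fun _ _ => (1 : ℝ))
    let Y : Matrix (Fin 1 ⊕ Fin r) (Fin 1 ⊕ Fin r) ℝ :=
      1 - Matrix.vecMulVec (Sum.elim (0 : Fin 1 → ℝ) (1 : Fin r → ℝ))
        (Sum.elim (1 : Fin 1 → ℝ) (0 : Fin r → ℝ))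
    let X : Matrix (Fin k ⊕ (Fin 1 ⊕ Fin r)) (Fin k ⊕ (Fin 1 ⊕ Fin r)) ℝ :=
      Matrix.fromBlocks 1 0 0 Y
    let H1 : Matrix (Fin k ⊕ Fin 1) (Fin k ⊕ Fin 1) ℝ :=
      Matrix.fromBlocks
        (ξ • (L11 * L11ᵀ + L12 * L12ᵀ) + c • Matrix.of (fun _ _ => (1 : ℝ)))
        (Matrix.of (fun _ _ => c * (1 + r)))
        (Matrix.of (fun _ _ => c))
        (Matrix.of (fun _ _ => c * (1 + r)))
    let H2 : Matrix (Fin k ⊕ Fin 1) (Fin r) ℝ := Matrix.of (fun _ _ => c)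
    X * (P * H * Pᵀ) * X⁻¹ =
      Matrix.reindex (Equiv.sumAssoc (Fin k) (Fin 1) (Fin r))
        (Equiv.sumAssoc (Fin k) (Fin 1) (Fin r))
        (Matrix.fromBlocks H1 H2 0 0) := by
  obtain ⟨σ, hσ⟩ := hP
  intro n c H Y X H1 H2
  set u : Fin 1 ⊕ Fin r → ℝ := Sum.elim 0 1 with hu
  set v : Fin 1 ⊕ Fin r → ℝ := Sum.elim 1 0 with hv
  have hPTP : Pᵀ * P = 1 := by
    rw [hσ, Equiv.Perm.permMatrix, ← PEquiv.toMatrix_symm, ← PEquiv.toMatrix_trans,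
      ← Equiv.toPEquiv_symm, ← Equiv.toPEquiv_trans]
    simp
  have hJ : P * (Matrix.of fun _ _ => (1:ℝ)) * Pᵀ = Matrix.of fun _ _ => (1:ℝ) := by
    rw [hσ, Equiv.Perm.permMatrix, ← PEquiv.toMatrix_symm, ← Equiv.toPEquiv_symm,
      PEquiv.toMatrix_toPEquiv_mul, PEquiv.mul_toMatrix_toPEquiv]
    rfl
  have hLL : P * (L * Lᵀ) * Pᵀ =
      (Matrix.fromBlocks L11 L12 0 0) * (Matrix.fromBlocks L11 L12 0 0)ᵀ := by
    rw [← hL]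
    simp only [transpose_mul, transpose_transpose, Matrix.mul_assoc]
    rw [← Matrix.mul_assoc Pᵀ P, hPTP, Matrix.one_mul]
  have hBB : (Matrix.fromBlocks L11 L12 0 0) *
        ((Matrix.fromBlocks L11 L12 0 0 : Matrix (Fin k ⊕ (Fin 1 ⊕ Fin r)) (Fin k ⊕ (Fin 1 ⊕ Fin r)) ℝ))ᵀ
      = (Matrix.fromBlocks (L11 * L11ᵀ + L12 * L12ᵀ) 0 0 0 :
          Matrix (Fin k ⊕ (Fin 1 ⊕ Fin r)) (Fin k ⊕ (Fin 1 ⊕ Fin r)) ℝ) := by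
    rw [fromBlocks_transpose, fromBlocks_multiply]
    simp
  have hPH : P * H * Pᵀ = ξ • Matrix.fromBlocks (L11 * L11ᵀ + L12 * L12ᵀ) 0 0 0
      + c • Matrix.of (fun _ _ => (1:ℝ)) := by
    simp only [H, Matrix.mul_add, Matrix.add_mul, Matrix.mul_smul, Matrix.smul_mul]
    rw [hLL, hBB, hJ]
  have hWW : Matrix.vecMulVec u v * Matrix.vecMulVec u v = 0 := by
    ext i j
    simp [mul_apply, vecMulVec_apply, Fintype.sum_sum_type, hu, hv]
  have hXinv : X⁻¹ = Matrix.fromBlocks 1 0 0 (1 + Matrix.vecMulVec u v) := by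
    apply inv_eq_right_inv
    rw [show X = Matrix.fromBlocks 1 0 0 Y from rfl, fromBlocks_multiply]
    have : Y * (1 + Matrix.vecMulVec u v) = 1 := by
      simp only [Y, ← hu, ← hv, sub_mul, mul_add, Matrix.mul_one, Matrix.one_mul, hWW]
      abel
    simp [this, fromBlocks_one]
  rw [hPH, hXinv]
  ext i j
  rcases i with i | i | i <;> rcases j with j | j | j <;>
    simp [X, Y, H1, H2, c, n, mul_apply, vecMulVec_apply, Fintype.sum_sum_type,
      fromBlocks_apply₁₁, fromBlocks_apply₁₂, fromBlocks_apply₂₁, fromBlocks_apply₂₂,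
      Equiv.sumAssoc, Finset.sum_const, Finset.mul_sum, Finset.sum_mul, hu, hv,
      one_apply, Finset.sum_ite_eq, Finset.sum_ite_eq', mul_assoc,
      eq_iff_true_of_subsingleton]
  all_goals try ring
  all_goals simp only [Finset.mul_sum, mul_assoc]
  all_goals ring
end

section
/- (Theorem 3.1, spectrum) With H⁽¹⁾ ∈ ℝ^{(k+1)×(k+1)} the lumped matrix from Theorem 3.1, H⁽¹⁾ has the same nonzero eigenvalues as H: for every λ ≠ 0, λ is an eigenvalue of H if and only if λ is an eigenvalue of H⁽¹⁾. -/
open Matrix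

/-- Transfer of nonzero eigenvalues from `A*B` to `B*A`. -/
lemma eig_transfer {α β : Type*} [Fintype α] [Fintype β]
    (A : Matrix α β ℝ) (B : Matrix β α ℝ) (lam : ℝ) (hl : lam ≠ 0)
    (v : α → ℝ) (hv : v ≠ 0) (h : (A * B) *ᵥ v = lam • v) :
    ∃ w : β → ℝ, w ≠ 0 ∧ (B * A) *ᵥ w = lam • w := by
  have hAB : A *ᵥ (B *ᵥ v) = lam • v := by rw [Matrix.mulVec_mulVec, h]
  refine ⟨B *ᵥ v, ?_, ?_⟩
  · intro hw
    rw [hw, Matrix.mulVec_zero] at hAB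
    have : v = 0 := by
      rcases smul_eq_zero.1 hAB.symm with h' | h'
      · exact absurd h' hl
      · exact h'
    exact hv this
  · rw [← Matrix.mulVec_mulVec, Matrix.mulVec_mulVec, ← Matrix.mulVec_mulVec, hAB,
      Matrix.mulVec_smul]

/-- Theorem 3.1 (spectrum): the lumped matrix `H⁽¹⁾` of order `k+1` has the same
nonzero eigenvalues as the hub matrix `H`. -/
theorem lumped_same_nonzero_eigenvalues (k m : ℕ) (hm : 0 < m)
    (ξ : ℝ) (hξ0 : 0 < ξ) (hξ1 : ξ < 1)
    (L P : Matrix (Fin k ⊕ Fin m) (Fin k ⊕ Fin m) ℝ)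
    (hP : ∃ σ : Equiv.Perm (Fin k ⊕ Fin m), P = σ.permMatrix ℝ)
    (L11 : Matrix (Fin k) (Fin k) ℝ) (L12 : Matrix (Fin k) (Fin m) ℝ)
    (hL : P * L * Pᵀ = Matrix.fromBlocks L11 L12 0 0) :
    let n : ℝ := (k : ℝ) + m
    let c : ℝ := (1 - ξ) / n
    let H : Matrix (Fin k ⊕ Fin m) (Fin k ⊕ Fin m) ℝ :=
      ξ • (L * Lᵀ) + c • Matrix.of (fun _ _ => (1 : ℝ))
    let H1 : Matrix (Fin k ⊕ Fin 1) (Fin k ⊕ Fin 1) ℝ :=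
      Matrix.fromBlocks
        (ξ • (L11 * L11ᵀ + L12 * L12ᵀ) + c • Matrix.of (fun _ _ => (1 : ℝ)))
        (Matrix.of (fun _ _ => c * m))
        (Matrix.of (fun _ _ => c))
        (Matrix.of (fun _ _ => c * m))
    ∀ lam : ℝ, lam ≠ 0 →
      ((∃ v : Fin k ⊕ Fin m → ℝ, v ≠ 0 ∧ H *ᵥ v = lam • v) ↔
        (∃ w : Fin k ⊕ Fin 1 → ℝ, w ≠ 0 ∧ H1 *ᵥ w = lam • w)) := by
  intro n c H H1 lam hlam
  obtain ⟨σ, hσ⟩ := hP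
  have hmR : (m : ℝ) ≠ 0 := Nat.cast_ne_zero.2 hm.ne'
  -- orthogonality of the permutation matrix
  have hPPT : P * Pᵀ = 1 := by
    subst hσ
    ext i j
    simp only [Matrix.mul_apply, Matrix.transpose_apply, Equiv.Perm.permMatrix,
      PEquiv.toMatrix_apply, Equiv.toPEquiv_apply, Option.mem_some_iff, Matrix.one_apply]
    rw [Finset.sum_eq_single (σ i)]
    · simp [σ.injective.eq_iff, eq_comm]
    · intro b _ hb
      have h' : ¬ σ i = b := fun h => hb h.symm
      simp [h']
    · simp
  have hPTP : Pᵀ * P = 1 := by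
    subst hσ
    ext i j
    simp only [Matrix.mul_apply, Matrix.transpose_apply, Equiv.Perm.permMatrix,
      PEquiv.toMatrix_apply, Equiv.toPEquiv_apply, Option.mem_some_iff, Matrix.one_apply]
    rw [Finset.sum_eq_single (σ.symm i)]
    · by_cases h : i = j <;> simp [h, Equiv.apply_eq_iff_eq_symm_apply, eq_comm]
    · intro b _ hb
      by_cases h : σ b = i
      · exact absurd (by rw [← h]; simp) hb
      · simp [h]
    · simp
  -- the factorization matrices
  set X : Matrix (Fin k) (Fin k) ℝ :=
    ξ • (L11 * L11ᵀ + L12 * L12ᵀ) + c • Matrix.of (fun _ _ => (1 : ℝ)) with hX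
  set A : Matrix (Fin k ⊕ Fin m) (Fin k ⊕ Fin 1) ℝ :=
    Matrix.fromBlocks X (Matrix.of fun _ _ => c * m) (Matrix.of fun _ _ => c)
      (Matrix.of fun _ _ => c * m) with hA
  set B : Matrix (Fin k ⊕ Fin 1) (Fin k ⊕ Fin m) ℝ :=
    Matrix.fromBlocks 1 0 0 (Matrix.of fun _ _ => (m : ℝ)⁻¹) with hB
  -- P * H * Pᵀ = A * B
  have hLT : P * Lᵀ * Pᵀ = (Matrix.fromBlocks L11 L12 0 0)ᵀ := by
    have h := congrArg Matrix.transpose hL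
    simpa [Matrix.transpose_mul, Matrix.mul_assoc] using h
  have hLL : P * (L * Lᵀ) * Pᵀ =
      Matrix.fromBlocks L11 L12 0 0 * (Matrix.fromBlocks L11 L12 0 0)ᵀ := by
    rw [← hLT, ← hL]
    rw [show P * L * Pᵀ * (P * Lᵀ * Pᵀ) = P * L * (Pᵀ * P) * Lᵀ * Pᵀ by
      simp only [Matrix.mul_assoc]]
    rw [hPTP, Matrix.mul_one]
    simp only [Matrix.mul_assoc]
  have hcJ : P * Matrix.of (fun _ _ => (1 : ℝ)) * Pᵀ = Matrix.of (fun _ _ => (1 : ℝ)) := by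
    subst hσ
    have h1 : (σ.permMatrix ℝ) * Matrix.of (fun _ _ => (1 : ℝ)) = Matrix.of (fun _ _ => (1:ℝ)) := by
      rw [Equiv.Perm.permMatrix, PEquiv.toMatrix_toPEquiv_mul]
      rfl
    have h2 : (Matrix.of (fun _ _ => (1 : ℝ)) : Matrix (Fin k ⊕ Fin m) (Fin k ⊕ Fin m) ℝ) *
        (σ.permMatrix ℝ)ᵀ = Matrix.of (fun _ _ => (1:ℝ)) := by
      rw [← PEquiv.toMatrix_symm, ← Equiv.toPEquiv_symm, ← Equiv.Perm.permMatrix,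
        Equiv.Perm.permMatrix, PEquiv.mul_toMatrix_toPEquiv]
      rfl
    rw [h1, h2]
  have hMMT : Matrix.fromBlocks L11 L12 0 0 * (Matrix.fromBlocks L11 L12 0 0)ᵀ =
      Matrix.fromBlocks (L11 * L11ᵀ + L12 * L12ᵀ) (0 : Matrix (Fin k) (Fin m) ℝ)
        (0 : Matrix (Fin m) (Fin k) ℝ) (0 : Matrix (Fin m) (Fin m) ℝ) := by
    rw [Matrix.fromBlocks_transpose, Matrix.fromBlocks_multiply]
    simp
  have hHAB : P * H * Pᵀ = A * B := by
    have heq : P * H * Pᵀ = ξ • (P * (L * Lᵀ) * Pᵀ) + c • (P * Matrix.of (fun _ _ => (1:ℝ)) * Pᵀ) := by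
      simp only [H, Matrix.add_mul, Matrix.mul_add, Matrix.smul_mul, Matrix.mul_smul]
    rw [heq, hLL, hcJ, hMMT]
    rw [hA, hB, Matrix.fromBlocks_multiply]
    ext (i | i) (j | j) <;>
      simp [Matrix.fromBlocks, Matrix.mul_apply, Fin.sum_univ_one, hX, hmR,
        Finset.sum_const, mul_assoc, mul_inv_cancel₀, mul_add]
  have hH1BA : H1 = B * A := by
    rw [hA, hB, Matrix.fromBlocks_multiply]
    ext (i | i) (j | j) <;>
      simp [H1, Matrix.fromBlocks, Matrix.mul_apply, Fin.sum_univ_one, hX, hmR,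
        Finset.sum_const, mul_assoc, mul_inv_cancel₀, inv_mul_cancel₀]
  constructor
  · rintro ⟨v, hv, hHv⟩
    have hv' : P *ᵥ v ≠ 0 := by
      intro h0
      apply hv
      have := congrArg (fun u => Pᵀ *ᵥ u) h0
      simpa [Matrix.mulVec_mulVec, hPTP] using this
    have hABv : (A * B) *ᵥ (P *ᵥ v) = lam • (P *ᵥ v) := by
      rw [← hHAB]
      rw [Matrix.mulVec_mulVec, show P * H * Pᵀ * P = P * H by
        rw [Matrix.mul_assoc, hPTP, Matrix.mul_one], ← Matrix.mulVec_mulVec, hHv,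
        Matrix.mulVec_smul]
    obtain ⟨w, hw, hw'⟩ := eig_transfer A B lam hlam _ hv' hABv
    exact ⟨w, hw, by rw [hH1BA]; exact hw'⟩
  · rintro ⟨w, hw, hw'⟩
    rw [hH1BA] at hw'
    obtain ⟨v, hv, hv'⟩ := eig_transfer B A lam hlam w hw hw'
    refine ⟨Pᵀ *ᵥ v, ?_, ?_⟩
    · intro h0
      apply hv
      have := congrArg (fun u => P *ᵥ u) h0
      simpa [Matrix.mulVec_mulVec, hPPT] using this
    · have hH : H = Pᵀ * (A * B) * P := by
        rw [← hHAB]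
        rw [show Pᵀ * (P * H * Pᵀ) * P = (Pᵀ * P) * H * (Pᵀ * P) by
          simp only [Matrix.mul_assoc], hPTP]
        simp
      rw [hH, Matrix.mulVec_mulVec, show Pᵀ * (A * B) * P * Pᵀ = Pᵀ * (A * B) by
        rw [Matrix.mul_assoc, hPPT, Matrix.mul_one], ← Matrix.mulVec_mulVec, hv',
        Matrix.mulVec_smul]
end

section
/- Let σ ∈ ℝ^{k+1} satisfy σᵀ H⁽¹⁾ = λ σᵀ with σ ≥ 0 entrywise, ‖σ‖₁ = 1, and λ ≠ 0, and write σᵀ = [σ₁:ₖᵀ, σₖ₊₁]. Then the last entry is σₖ₊₁ = (1−ξ)(n−k)/(n λ). -/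
open Matrix

/-- If `σᵀ H⁽¹⁾ = λ σᵀ` with `σ ≥ 0`, `‖σ‖₁ = 1` and `λ ≠ 0`, then the last entry of
`σ` equals `(1−ξ)(n−k)/(n λ)`. -/
theorem last_entry_of_sigma (k m : ℕ) (hm : 0 < m)
    (ξ : ℝ) (hξ0 : 0 < ξ) (hξ1 : ξ < 1)
    (L11 : Matrix (Fin k) (Fin k) ℝ) (L12 : Matrix (Fin k) (Fin m) ℝ)
    (lam : ℝ) (hlam : lam ≠ 0) (σ : Fin k ⊕ Fin 1 → ℝ)
    (hσnn : ∀ i, 0 ≤ σ i) (hσ1 : ∑ i, |σ i| = 1)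
    (heig : Matrix.vecMul σ
      (Matrix.fromBlocks
        (ξ • (L11 * L11ᵀ + L12 * L12ᵀ) +
          ((1 - ξ) / ((k : ℝ) + m)) • Matrix.of (fun _ _ => (1 : ℝ)))
        (Matrix.of (fun _ _ => ((1 - ξ) / ((k : ℝ) + m)) * m))
        (Matrix.of (fun _ _ => (1 - ξ) / ((k : ℝ) + m)))
        (Matrix.of (fun _ _ => ((1 - ξ) / ((k : ℝ) + m)) * m))) = lam • σ) :
    σ (Sum.inr 0) = (1 - ξ) * m / (((k : ℝ) + m) * lam) := by
  have hsum : ∑ i, σ i = 1 := by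
    rw [← hσ1]
    exact Finset.sum_congr rfl fun i _ => (abs_of_nonneg (hσnn i)).symm
  have h := congrFun heig (Sum.inr 0)
  rw [Matrix.vecMul] at h
  simp only [dotProduct, Pi.smul_apply, smul_eq_mul] at h
  rw [Fintype.sum_sum_type] at h
  simp only [Matrix.fromBlocks_apply₁₂, Matrix.fromBlocks_apply₂₂, Matrix.of_apply] at h
  rw [← Finset.sum_mul, ← Finset.sum_mul, ← add_mul] at h
  have h2 : ((1 - ξ) / ((k : ℝ) + m)) * m = lam * σ (Sum.inr 0) := by
    rw [← h]
    have : (∑ i : Fin k, σ (Sum.inl i)) + ∑ i : Fin 1, σ (Sum.inr i) = 1 := by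
      rw [← Fintype.sum_sum_type]; exact hsum
    rw [this, one_mul]
  have hm' : (0:ℝ) < m := by exact_mod_cast hm
  have hn : (0:ℝ) < (k:ℝ) + m := by positivity
  field_simp at h2 ⊢
  linarith [h2]
end

section
/- (Theorem 3.2) Suppose P L Pᵀ = [[L₁₁, L₁₂], [0, 0]] and let σ ∈ ℝ^{k+1} satisfy σᵀ H⁽¹⁾ = λ σᵀ with σ ≥ 0 entrywise, ‖σ‖₁ = 1, and λ ≠ 0, where H⁽¹⁾ is the lumped hub matrix. Partition σᵀ = [σ₁:ₖᵀ, σₖ₊₁] and define π̃ᵀ = [σ₁:ₖᵀ, (1/λ) σᵀ [[((1−ξ)/n) e eᵀ], [((1−ξ)/n) eᵀ]]] P, where the inner block matrix lies in ℝ^{(k+1)×m} with e the all-ones vector of length k (resp. m for eᵀ). Then π̃ᵀ H = λ π̃ᵀ, i.e., π̃ is a left eigenvector of the hub matrix H for the eigenvalue λ. -/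
open Matrix

section Aux

variable {n : Type*} [Fintype n] [DecidableEq n]

lemma perm_transpose_mul (e : Equiv.Perm n) :
    (e.permMatrix ℝ)ᵀ * e.permMatrix ℝ = 1 := by
  rw [Equiv.Perm.permMatrix, ← PEquiv.toMatrix_symm, ← Equiv.toPEquiv_symm,
    ← PEquiv.toMatrix_trans, ← Equiv.toPEquiv_trans]
  simp

lemma perm_mul_ones (e : Equiv.Perm n) :
    e.permMatrix ℝ * (Matrix.of (fun _ _ => (1:ℝ))) = Matrix.of (fun _ _ => (1:ℝ)) := by
  ext i j
  simp [Matrix.mul_apply, Equiv.Perm.permMatrix, PEquiv.toMatrix_toPEquiv_eq, Matrix.one_apply,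
    Equiv.toPEquiv_apply, Finset.filter_eq']

lemma ones_mul_perm (e : Equiv.Perm n) :
    (Matrix.of (fun _ _ => (1:ℝ))) * e.permMatrix ℝ = Matrix.of (fun _ _ => (1:ℝ)) := by
  ext i j
  simp [Matrix.mul_apply, Equiv.Perm.permMatrix, PEquiv.toMatrix_toPEquiv_eq, Matrix.one_apply,
    Equiv.toPEquiv_apply, Equiv.apply_eq_iff_eq_symm_apply, Finset.filter_eq']

end Aux

/-- Theorem 3.2: if `σᵀ H⁽¹⁾ = λ σᵀ` with `σ ≥ 0`, `‖σ‖₁ = 1`, `λ ≠ 0`, then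
`π̃ᵀ = [σ₁:ₖᵀ, (1/λ) σᵀ [[((1−ξ)/n) eeᵀ], [((1−ξ)/n) eᵀ]]] P` is a left
eigenvector of the hub matrix `H` for the eigenvalue `λ`. -/
theorem hub_vector_recovery (k m : ℕ) (hm : 0 < m)
    (ξ : ℝ) (hξ0 : 0 < ξ) (hξ1 : ξ < 1)
    (L P : Matrix (Fin k ⊕ Fin m) (Fin k ⊕ Fin m) ℝ)
    (hP : ∃ σ : Equiv.Perm (Fin k ⊕ Fin m), P = σ.permMatrix ℝ)
    (L11 : Matrix (Fin k) (Fin k) ℝ) (L12 : Matrix (Fin k) (Fin m) ℝ)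
    (hL : P * L * Pᵀ = Matrix.fromBlocks L11 L12 0 0)
    (lam : ℝ) (hlam : lam ≠ 0) (σ : Fin k ⊕ Fin 1 → ℝ)
    (hσnn : ∀ i, 0 ≤ σ i) (hσ1 : ∑ i, |σ i| = 1)
    (heig : Matrix.vecMul σ
      (Matrix.fromBlocks
        (ξ • (L11 * L11ᵀ + L12 * L12ᵀ) +
          ((1 - ξ) / ((k : ℝ) + m)) • Matrix.of (fun _ _ => (1 : ℝ)))
        (Matrix.of (fun _ _ => ((1 - ξ) / ((k : ℝ) + m)) * m))
        (Matrix.of (fun _ _ => (1 - ξ) / ((k : ℝ) + m)))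
        (Matrix.of (fun _ _ => ((1 - ξ) / ((k : ℝ) + m)) * m))) = lam • σ) :
    let c : ℝ := (1 - ξ) / ((k : ℝ) + m)
    let H : Matrix (Fin k ⊕ Fin m) (Fin k ⊕ Fin m) ℝ :=
      ξ • (L * Lᵀ) + c • Matrix.of (fun _ _ => (1 : ℝ))
    let K : Matrix (Fin k ⊕ Fin 1) (Fin m) ℝ := Matrix.of (fun _ _ => c)
    let πt : Fin k ⊕ Fin m → ℝ :=
      Matrix.vecMul (Sum.elim (fun i => σ (Sum.inl i)) ((1 / lam) • Matrix.vecMul σ K)) P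
    Matrix.vecMul πt H = lam • πt := by
  obtain ⟨e, hPe⟩ := hP
  intro c H K πt
  set J : Matrix (Fin k ⊕ Fin m) (Fin k ⊕ Fin m) ℝ := Matrix.of (fun _ _ => (1:ℝ)) with hJ
  have hPTP : Pᵀ * P = 1 := by rw [hPe]; exact perm_transpose_mul e
  have hPJ : P * J = J := by rw [hPe]; exact perm_mul_ones e
  have hJP : J * P = J := by rw [hPe]; exact ones_mul_perm e
  set Lt : Matrix (Fin k ⊕ Fin m) (Fin k ⊕ Fin m) ℝ := Matrix.fromBlocks L11 L12 0 0 with hLt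
  -- P * L = Lt * P
  have h1 : P * L = Lt * P := by
    rw [← hL, Matrix.mul_assoc (P * L), hPTP, Matrix.mul_one]
  -- P * Lᵀ = Ltᵀ * P
  have h2 : P * Lᵀ = Ltᵀ * P := by
    have h1t := congrArg Matrix.transpose h1
    simp only [Matrix.transpose_mul] at h1t
    -- h1t : Lᵀ * Pᵀ = Pᵀ * Ltᵀ
    have := congrArg (fun M => P * M * P) h1t
    simp only [← Matrix.mul_assoc] at this
    -- this : P * Lᵀ * Pᵀ * P = P * Pᵀ * Ltᵀ * P
    rw [Matrix.mul_assoc (P * Lᵀ), hPTP, Matrix.mul_one] at this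
    rw [this]
    have hPPT : P * Pᵀ = 1 := by
      rw [hPe, Equiv.Perm.permMatrix, ← PEquiv.toMatrix_symm, ← Equiv.toPEquiv_symm,
        ← PEquiv.toMatrix_trans, ← Equiv.toPEquiv_trans]
      simp
    rw [hPPT, Matrix.one_mul]
  set Ht : Matrix (Fin k ⊕ Fin m) (Fin k ⊕ Fin m) ℝ := ξ • (Lt * Ltᵀ) + c • J with hHt
  have hPH : P * H = Ht * P := by
    show P * (ξ • (L * Lᵀ) + c • J) = Ht * P
    rw [Matrix.mul_add, Matrix.mul_smul, Matrix.mul_smul, hPJ, ← Matrix.mul_assoc, h1,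
      Matrix.mul_assoc, h2, ← Matrix.mul_assoc, hHt, Matrix.add_mul, Matrix.smul_mul,
      Matrix.smul_mul, hJP]
  -- block form of Ht
  set A : Matrix (Fin k) (Fin k) ℝ :=
    ξ • (L11 * L11ᵀ + L12 * L12ᵀ) + c • Matrix.of (fun _ _ => (1:ℝ)) with hA
  have hHtB : Ht = Matrix.fromBlocks A (Matrix.of fun _ _ => c) (Matrix.of fun _ _ => c)
      (Matrix.of fun _ _ => c) := by
    have hLL : Lt * Ltᵀ = Matrix.fromBlocks (L11 * L11ᵀ + L12 * L12ᵀ) 0 0 0 := by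
      rw [hLt]
      simp [Matrix.fromBlocks_transpose, Matrix.fromBlocks_multiply]
    rw [hHt, hLL]
    ext i j
    rcases i with i | i <;> rcases j with j | j <;>
      simp [hA, hJ, Matrix.fromBlocks, mul_comm, mul_add]
  -- the abstract left vector
  set b : Fin m → ℝ := (1 / lam) • Matrix.vecMul σ K with hb
  set t : ℝ := σ (Sum.inr 0) with htdef
  set Sa : ℝ := ∑ p, σ (Sum.inl p) with hSa
  have hbval : ∀ j, b j = (1 / lam) * ((Sa + t) * c) := by
    intro j
    rw [hb]
    simp only [Pi.smul_apply, smul_eq_mul, Matrix.vecMul, dotProduct]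
    congr 1
    rw [Fintype.sum_sum_type]
    simp only [K, Matrix.of_apply]
    rw [← Finset.sum_mul]
    simp [hSa, htdef, add_mul]
  -- componentwise consequences of heig
  have h1e : ∀ i : Fin k, (∑ p, σ (Sum.inl p) * A p i) + t * c = lam * σ (Sum.inl i) := by
    intro i
    have := congrFun heig (Sum.inl i)
    simp only [Matrix.vecMul, dotProduct, Pi.smul_apply, smul_eq_mul] at this
    rw [Fintype.sum_sum_type] at this
    simpa [Matrix.fromBlocks, hA] using this
  have h2e : Sa * (c * m) + t * (c * m) = lam * t := by
    have := congrFun heig (Sum.inr 0)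
    simp only [Matrix.vecMul, dotProduct, Pi.smul_apply, smul_eq_mul] at this
    rw [Fintype.sum_sum_type] at this
    simp only [Matrix.fromBlocks, Matrix.of_apply, Sum.elim_inl, Sum.elim_inr] at this
    rw [← Finset.sum_mul] at this
    simpa [hSa, htdef, mul_comm, mul_left_comm] using this
  -- two scalar facts clearing the division by lam
  have hmc : (m : ℝ) * (1 / lam * ((Sa + t) * c)) * c = t * c := by
    have h3 : ((Sa + t) * (c * m)) * c * (1 / lam) = (lam * t) * c * (1 / lam) := by
      rw [← h2e]; ring
    calc (m : ℝ) * (1 / lam * ((Sa + t) * c)) * c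
        = ((Sa + t) * (c * m)) * c * (1 / lam) := by ring
      _ = (lam * t) * c * (1 / lam) := h3
      _ = t * c := by
          field_simp
  have hr : lam * (1 / lam * ((Sa + t) * c)) = (Sa + t) * c := by
    field_simp
  -- key identity
  have key : Matrix.vecMul (Sum.elim (fun i => σ (Sum.inl i)) b) Ht
      = lam • Sum.elim (fun i => σ (Sum.inl i)) b := by
    rw [hHtB, Matrix.vecMul_fromBlocks]
    funext j
    have hvc : ∀ {ι : Type} (j' : ι), Matrix.vecMul b (Matrix.of fun _ _ => c) j' =
        (m : ℝ) * (1 / lam * ((Sa + t) * c)) * c := by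
      intro ι j'
      simp only [Matrix.vecMul, dotProduct, Matrix.of_apply]
      rw [Finset.sum_congr rfl (fun p _ => by rw [hbval p])]
      simp only [Finset.sum_const, Finset.card_univ, Fintype.card_fin, nsmul_eq_mul]
      ring
    rcases j with j | j
    · simp only [Sum.elim_inl, Sum.elim_comp_inl, Sum.elim_comp_inr, Pi.add_apply,
        Pi.smul_apply, smul_eq_mul]
      have hva : Matrix.vecMul (fun i => σ (Sum.inl i)) A j
          = ∑ p, σ (Sum.inl p) * A p j := rfl
      rw [hva, hvc j, hmc]
      exact h1e j
    · simp only [Sum.elim_inr, Sum.elim_comp_inl, Sum.elim_comp_inr, Pi.add_apply,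
        Pi.smul_apply, smul_eq_mul]
      have hva : Matrix.vecMul (fun i => σ (Sum.inl i)) (Matrix.of fun _ _ => c) j
          = Sa * c := by
        simp only [Matrix.vecMul, dotProduct, Matrix.of_apply]
        rw [← Finset.sum_mul]
      rw [hva, hvc j, hmc, hbval j, hr]
      ring
  -- finish
  show Matrix.vecMul (Matrix.vecMul (Sum.elim (fun i => σ (Sum.inl i)) b) P) H
      = lam • Matrix.vecMul (Sum.elim (fun i => σ (Sum.inl i)) b) P
  rw [Matrix.vecMul_vecMul, hPH, ← Matrix.vecMul_vecMul, key]
  funext j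
  simp only [Matrix.vecMul, dotProduct, Pi.smul_apply, smul_eq_mul]
  rw [Finset.mul_sum]
  exact Finset.sum_congr rfl (fun p _ => by ring)
end

section
/- With the hypotheses and notation of Theorem 3.2, the recovered vector π̃ᵀ = [σ₁:ₖᵀ, (1/λ) σᵀ [[((1−ξ)/n) e eᵀ], [((1−ξ)/n) eᵀ]]] P is entrywise nonnegative and satisfies the normalization eᵀ π̃ = 1. -/
open Matrix

/-- With the hypotheses of Theorem 3.2, the recovered vector
`π̃ᵀ = [σ₁:ₖᵀ, (1/λ) σᵀ [[((1−ξ)/n) eeᵀ], [((1−ξ)/n) eᵀ]]] P` is entrywise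
nonnegative and satisfies `eᵀ π̃ = 1`. -/
theorem hub_vector_nonneg_normalized (k m : ℕ) (hm : 0 < m)
    (ξ : ℝ) (hξ0 : 0 < ξ) (hξ1 : ξ < 1)
    (L P : Matrix (Fin k ⊕ Fin m) (Fin k ⊕ Fin m) ℝ)
    (hP : ∃ σ : Equiv.Perm (Fin k ⊕ Fin m), P = σ.permMatrix ℝ)
    (L11 : Matrix (Fin k) (Fin k) ℝ) (L12 : Matrix (Fin k) (Fin m) ℝ)
    (hL : P * L * Pᵀ = Matrix.fromBlocks L11 L12 0 0)
    (lam : ℝ) (hlam : lam ≠ 0) (σ : Fin k ⊕ Fin 1 → ℝ)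
    (hσnn : ∀ i, 0 ≤ σ i) (hσ1 : ∑ i, |σ i| = 1)
    (heig : Matrix.vecMul σ
      (Matrix.fromBlocks
        (ξ • (L11 * L11ᵀ + L12 * L12ᵀ) +
          ((1 - ξ) / ((k : ℝ) + m)) • Matrix.of (fun _ _ => (1 : ℝ)))
        (Matrix.of (fun _ _ => ((1 - ξ) / ((k : ℝ) + m)) * m))
        (Matrix.of (fun _ _ => (1 - ξ) / ((k : ℝ) + m)))
        (Matrix.of (fun _ _ => ((1 - ξ) / ((k : ℝ) + m)) * m))) = lam • σ) :
    let c : ℝ := (1 - ξ) / ((k : ℝ) + m)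
    let K : Matrix (Fin k ⊕ Fin 1) (Fin m) ℝ := Matrix.of (fun _ _ => c)
    let πt : Fin k ⊕ Fin m → ℝ :=
      Matrix.vecMul (Sum.elim (fun i => σ (Sum.inl i)) ((1 / lam) • Matrix.vecMul σ K)) P
    (∀ i, 0 ≤ πt i) ∧ ∑ i, πt i = 1 := by
  intro c K πt
  obtain ⟨e, rfl⟩ := hP
  -- basic facts
  have hn : (0:ℝ) < (k:ℝ) + m := by positivity
  have hc : 0 < c := div_pos (by linarith) hn
  have hS : ∑ i, σ i = 1 := by
    rw [← hσ1]; exact Finset.sum_congr rfl (fun i _ => (abs_of_nonneg (hσnn i)).symm)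
  -- eigen equation at inr 0
  have hkey : lam * σ (Sum.inr 0) = c * m := by
    have := congrFun heig (Sum.inr 0)
    simp only [Matrix.vecMul, dotProduct, Pi.smul_apply, smul_eq_mul] at this
    rw [← this]
    rw [Fintype.sum_sum_type]
    simp only [Matrix.fromBlocks_apply₁₂, Matrix.fromBlocks_apply₂₂, Matrix.of_apply]
    have : ∀ S : Finset (Fin k), ∑ i ∈ S, σ (Sum.inl i) * (c * m) = (∑ i ∈ S, σ (Sum.inl i)) * (c * m) := fun S => (Finset.sum_mul ..).symm
    rw [this, ← Finset.sum_mul, ← add_mul]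
    rw [show (∑ i, σ (Sum.inl i)) + ∑ i : Fin 1, σ (Sum.inr i) = ∑ i, σ i by
      rw [Fintype.sum_sum_type]]
    rw [hS, one_mul]
  have hlampos : 0 < lam := by
    rcases lt_or_gt_of_ne hlam with h | h
    · exfalso
      have h1 : 0 < c * m := by positivity
      have h2 : lam * σ (Sum.inr 0) ≤ 0 :=
        mul_nonpos_of_nonpos_of_nonneg h.le (hσnn _)
      linarith
    · exact h
  -- vecMul σ K is constant c
  have hK : ∀ j, Matrix.vecMul σ K j = c := by
    intro j
    simp only [Matrix.vecMul, dotProduct, K, Matrix.of_apply]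
    rw [← Finset.sum_mul, hS, one_mul]
  set v : Fin k ⊕ Fin m → ℝ :=
    Sum.elim (fun i => σ (Sum.inl i)) ((1 / lam) • Matrix.vecMul σ K) with hv
  have hvnn : ∀ j, 0 ≤ v j := by
    rintro (a | b)
    · exact hσnn _
    · simp only [hv, Sum.elim_inr, Pi.smul_apply, smul_eq_mul, hK]
      positivity
  have hPapply : ∀ j i, (e.permMatrix ℝ) j i = if e j = i then (1:ℝ) else 0 := by
    intro j i
    simp [Equiv.Perm.permMatrix, PEquiv.toMatrix_apply, Equiv.toPEquiv_apply]
  have hπ : ∀ i, πt i = ∑ j, v j * (e.permMatrix ℝ) j i := fun i => rfl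
  constructor
  · intro i
    rw [hπ]
    exact Finset.sum_nonneg fun j _ => mul_nonneg (hvnn j) (by rw [hPapply]; positivity)
  · have hsum : ∑ i, πt i = ∑ j, v j := by
      simp only [hπ]
      rw [Finset.sum_comm]
      refine Finset.sum_congr rfl fun j _ => ?_
      rw [← Finset.mul_sum]
      have : ∑ i, (e.permMatrix ℝ) j i = 1 := by
        simp only [hPapply]
        rw [Finset.sum_ite_eq Finset.univ (e j) (fun _ => (1:ℝ))]
        simp
      rw [this, mul_one]
    rw [hsum, hv, Fintype.sum_sum_type]
    simp only [Sum.elim_inl, Sum.elim_inr, Pi.smul_apply, smul_eq_mul, hK]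
    have : ∑ _j : Fin m, 1 / lam * c = σ (Sum.inr 0) := by
      rw [Finset.sum_const]
      simp only [Finset.card_univ, Fintype.card_fin, nsmul_eq_mul]
      field_simp
      linarith [hkey]
    rw [this, ← hS, Fintype.sum_sum_type]
    congr 1
    simp
end

section
/- (Generalization of Theorem 3.1, Remark 3.2) Let Ŷ ∈ ℝ^{m×m} be any invertible matrix satisfying Ŷ e = e₁, where e ∈ ℝ^m is the all-ones vector and e₁ is the first standard basis vector, and set X̂ = diag(I_k, Ŷ). If P L Pᵀ = [[L₁₁, L₁₂], [0, 0]], then the last m − 1 rows of X̂ P H Pᵀ X̂⁻¹ are zero. -/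
open Matrix

/-- Remark 3.2 (generalization of Theorem 3.1): for any invertible `Ŷ` with
`Ŷ e = e₁` and `X̂ = diag(I_k, Ŷ)`, if `P L Pᵀ = [[L₁₁, L₁₂], [0, 0]]`, then the
last `m − 1` rows of `X̂ P H Pᵀ X̂⁻¹` are zero. Here `m = 1 + r` and `Fin m` is
realized as `Fin 1 ⊕ Fin r`. -/
theorem generalized_lumping_zero_rows (k r : ℕ)
    (ξ : ℝ) (hξ0 : 0 < ξ) (hξ1 : ξ < 1)
    (L P : Matrix (Fin k ⊕ (Fin 1 ⊕ Fin r)) (Fin k ⊕ (Fin 1 ⊕ Fin r)) ℝ)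
    (hP : ∃ σ : Equiv.Perm (Fin k ⊕ (Fin 1 ⊕ Fin r)), P = σ.permMatrix ℝ)
    (L11 : Matrix (Fin k) (Fin k) ℝ) (L12 : Matrix (Fin k) (Fin 1 ⊕ Fin r) ℝ)
    (hL : P * L * Pᵀ = Matrix.fromBlocks L11 L12 0 0)
    (Yhat : Matrix (Fin 1 ⊕ Fin r) (Fin 1 ⊕ Fin r) ℝ)
    (hYhat_inv : IsUnit Yhat)
    (hYhat_e : Yhat *ᵥ (fun _ => (1 : ℝ)) = Sum.elim (1 : Fin 1 → ℝ) (0 : Fin r → ℝ)) :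
    let H : Matrix (Fin k ⊕ (Fin 1 ⊕ Fin r)) (Fin k ⊕ (Fin 1 ⊕ Fin r)) ℝ :=
      ξ • (L * Lᵀ) + ((1 - ξ) / ((k : ℝ) + (1 + r))) • Matrix.of (fun _ _ => (1 : ℝ))
    let Xhat : Matrix (Fin k ⊕ (Fin 1 ⊕ Fin r)) (Fin k ⊕ (Fin 1 ⊕ Fin r)) ℝ :=
      Matrix.fromBlocks 1 0 0 Yhat
    ∀ (i : Fin r) (j : Fin k ⊕ (Fin 1 ⊕ Fin r)),
      (Xhat * (P * H * Pᵀ) * Xhat⁻¹) (Sum.inr (Sum.inr i)) j = 0 := by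
  intro H Xhat i j
  obtain ⟨σ, rfl⟩ := hP
  set P : Matrix (Fin k ⊕ (Fin 1 ⊕ Fin r)) (Fin k ⊕ (Fin 1 ⊕ Fin r)) ℝ :=
    σ.permMatrix ℝ with hPdef
  set c : ℝ := (1 - ξ) / ((k : ℝ) + (1 + r)) with hc
  set J : Matrix (Fin k ⊕ (Fin 1 ⊕ Fin r)) (Fin k ⊕ (Fin 1 ⊕ Fin r)) ℝ :=
    Matrix.of (fun _ _ => (1 : ℝ)) with hJ
  -- the transpose of the permutation matrix is the matrix of the inverse
  have hPT : Pᵀ = (σ.symm.toPEquiv).toMatrix := by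
    ext a b
    simp only [hPdef, Equiv.Perm.permMatrix, PEquiv.toMatrix_apply, Equiv.toPEquiv_apply,
      Option.mem_def, transpose_apply, Option.some_inj]
    by_cases h : σ b = a
    · rw [if_pos h, if_pos (by rw [← h, Equiv.symm_apply_apply])]
    · rw [if_neg h, if_neg (fun h2 => h (by rw [← h2, Equiv.apply_symm_apply]))]
  have hPTP : Pᵀ * P = 1 := by
    rw [hPT, hPdef]
    show (σ.symm.toPEquiv).toMatrix * (σ.toPEquiv).toMatrix = 1
    rw [← PEquiv.toMatrix_trans, ← Equiv.toPEquiv_trans, Equiv.symm_trans_self,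
      Equiv.toPEquiv_refl, PEquiv.toMatrix_refl]
  have hPJP : P * J * Pᵀ = J := by
    rw [hPdef, hPT]
    show (σ.toPEquiv).toMatrix * J * (σ.symm.toPEquiv).toMatrix = J
    rw [PEquiv.toMatrix_toPEquiv_mul, PEquiv.mul_toMatrix_toPEquiv]
    rfl
  set B : Matrix (Fin k ⊕ (Fin 1 ⊕ Fin r)) (Fin k ⊕ (Fin 1 ⊕ Fin r)) ℝ :=
    Matrix.fromBlocks L11 L12 0 0 with hB
  have hPHP : P * H * Pᵀ = ξ • (B * Bᵀ) + c • J := by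
    have h1 : P * (L * Lᵀ) * Pᵀ = B * Bᵀ := by
      have : P * (L * Lᵀ) * Pᵀ = (P * L * Pᵀ) * (P * Lᵀ * Pᵀ) := by
        rw [show (P * L * Pᵀ) * (P * Lᵀ * Pᵀ) = P * L * (Pᵀ * P) * Lᵀ * Pᵀ by
          simp only [Matrix.mul_assoc]]
        rw [hPTP]
        simp only [Matrix.mul_assoc, Matrix.one_mul]
      rw [this, hL]
      congr 1
      have := congrArg Matrix.transpose hL
      simpa [Matrix.transpose_mul, Matrix.mul_assoc] using this
    show P * (ξ • (L * Lᵀ) + c • J) * Pᵀ = _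
    rw [Matrix.mul_add, Matrix.add_mul, Matrix.mul_smul, Matrix.smul_mul,
      Matrix.mul_smul, Matrix.smul_mul, h1, hPJP]
  -- entries of the bottom rows of P H Pᵀ are constantly c
  have hrowPHP : ∀ (s : Fin 1 ⊕ Fin r) l, (P * H * Pᵀ) (Sum.inr s) l = c := by
    intro s l
    rw [hPHP]
    have hBB : (B * Bᵀ) (Sum.inr s) l = 0 := by
      rw [Matrix.mul_apply]
      apply Finset.sum_eq_zero
      intro t _
      have : B (Sum.inr s) t = 0 := by
        rcases t with t | t <;> simp [hB]
      rw [this, zero_mul]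
    simp [Matrix.add_apply, Matrix.smul_apply, hBB, hJ]
  -- the bottom rows of Xhat * (P H Pᵀ) vanish
  have hrow : ∀ l, (Xhat * (P * H * Pᵀ)) (Sum.inr (Sum.inr i)) l = 0 := by
    intro l
    rw [Matrix.mul_apply, Fintype.sum_sum_type]
    have h1 : ∀ a : Fin k, Xhat (Sum.inr (Sum.inr i)) (Sum.inl a) = 0 := by
      intro a; simp [Xhat]
    have h2 : ∀ b : Fin 1 ⊕ Fin r,
        Xhat (Sum.inr (Sum.inr i)) (Sum.inr b) = Yhat (Sum.inr i) b := by
      intro b; simp [Xhat]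
    have hsum : ∑ b : Fin 1 ⊕ Fin r, Yhat (Sum.inr i) b = 0 := by
      have := congrFun hYhat_e (Sum.inr i)
      simpa [Matrix.mulVec, dotProduct] using this
    calc (∑ a : Fin k, Xhat (Sum.inr (Sum.inr i)) (Sum.inl a) *
            (P * H * Pᵀ) (Sum.inl a) l) +
          ∑ b : Fin 1 ⊕ Fin r, Xhat (Sum.inr (Sum.inr i)) (Sum.inr b) *
            (P * H * Pᵀ) (Sum.inr b) l
        = 0 + ∑ b : Fin 1 ⊕ Fin r, Yhat (Sum.inr i) b * c := by
          congr 1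
          · apply Finset.sum_eq_zero; intro a _; rw [h1, zero_mul]
          · apply Finset.sum_congr rfl; intro b _; rw [h2, hrowPHP]
      _ = 0 := by rw [← Finset.sum_mul, hsum, zero_mul, zero_add]
  rw [Matrix.mul_apply]
  apply Finset.sum_eq_zero
  intro l _
  rw [hrow l, zero_mul]
end
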